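/- arXiv:1105.1178 — 3 statements merged into one kernel-verified Lean document; each statement's English description precedes it below -/
import Mathlib

section
/- Let Θ(x_i,x_j) = θ10·x_i·(1-x_j) + θ01·(1-x_i)·x_j with θ10 ≥ a and θ01 ≥ b + f, where a, b, f are nonnegative reals. If the incoming variable-to-factor message is m(x_i) with m(0) = a and m(1) = b + f, then the min-sum outgoing message μ(x_j) = min_{x_i ∈ {0,1}} [Θ(x_i,x_j) + m(x_i)] satisfies μ(0) = a and μ(1) = b + f; i.e., the factor propagates the message unchanged. -/
/-- Lemma 1 (Message-Preserving Factors): the factor propagates the message unchanged. -/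
theorem message_preserving_factors (θ10 θ01 a b f : ℝ)
    (ha : 0 ≤ a) (hb : 0 ≤ b) (hf : 0 ≤ f)
    (h10 : a ≤ θ10) (h01 : b + f ≤ θ01) :
    let Θ : ℝ → ℝ → ℝ := fun xi xj => θ10 * xi * (1 - xj) + θ01 * (1 - xi) * xj
    min (Θ 0 0 + a) (Θ 1 0 + (b + f)) = a ∧
    min (Θ 0 1 + a) (Θ 1 1 + (b + f)) = b + f := by
  intro Θ
  simp only [Θ]
  norm_num
  constructor <;> linarith
end

section
/- Let Θ(x_i,x_j) = θ10·x_i·(1-x_j) + θ01·(1-x_i)·x_j with θ10, θ01 ≥ 0 (submodular canonical form). If the incoming message is m(x_i) = (α, 0) with α ≥ 0, then the min-sum outgoing message is μ(x_j) = (min(α, θ10), 0); in particular, messages of the form (nonnegative, 0) are closed under passage through submodular canonical-form factors. -/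
/-- Iterated homogeneity key step: messages of the form (nonnegative, 0) are closed
under passage through submodular canonical-form factors. -/
theorem homogeneous_message_closure (θ10 θ01 α : ℝ)
    (h10 : 0 ≤ θ10) (h01 : 0 ≤ θ01) (hα : 0 ≤ α) :
    let Θ : ℝ → ℝ → ℝ := fun xi xj => θ10 * xi * (1 - xj) + θ01 * (1 - xi) * xj
    min (Θ 0 0 + α) (Θ 1 0 + 0) = min α θ10 ∧
    min (Θ 0 1 + α) (Θ 1 1 + 0) = 0 ∧
    0 ≤ min α θ10 := by
  refine ⟨by ring_nf, ?_, le_min hα h10⟩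
  simp only []
  rw [min_eq_right]
  · ring
  · nlinarith
end

section
/- Let E be the energy of the canonical 4-variable counterexample: variables x_1,…,x_4 ∈ {0,1} on a cycle with symmetric pairwise potentials Θ_{12}, Θ_{23}, Θ_{34}, Θ_{41}, each Θ(x,y) = λ·|x−y| (equivalently λ·(x(1−y)+(1−x)y)), unary potentials Θ_1(x_1) = a·(1−x_1), Θ_4(x_4) = a·(1−x_4), Θ_2(x_2) = b·x_2, Θ_3(x_3) = b·x_3, with λ > 2a > 2b > 0. Then the unique minimizer of E is the all-ones assignment (1,1,1,1). -/
/-- The canonical 4-variable cycle counterexample: with λ > 2a > 2b > 0, the unique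
minimizer of the energy is the all-ones assignment. -/
theorem canonical_counterexample_optimum (a b lam : ℝ)
    (hb : 0 < 2 * b) (hab : 2 * b < 2 * a) (hlam : 2 * a < lam) :
    let ind : Bool → ℝ := fun v => if v then 1 else 0
    let E : (Fin 4 → Bool) → ℝ := fun x =>
      a * (1 - ind (x 0)) + b * ind (x 1) + b * ind (x 2) + a * (1 - ind (x 3))
        + lam * |ind (x 0) - ind (x 1)| + lam * |ind (x 1) - ind (x 2)|
        + lam * |ind (x 2) - ind (x 3)| + lam * |ind (x 3) - ind (x 0)|
    ∀ x : Fin 4 → Bool, x ≠ (fun _ => true) → E (fun _ => true) < E x := by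
  intro ind E x hx
  rcases h0 : x 0 <;> rcases h1 : x 1 <;> rcases h2 : x 2 <;> rcases h3 : x 3 <;>
    simp only [E, ind, h0, h1, h2, h3, if_true, if_false] <;>
    norm_num <;>
    try linarith
  exact absurd (funext fun i => by fin_cases i <;> assumption) hx
end
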